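/- arXiv:2306.02387 — 2 statements merged into one kernel-verified Lean document; each statement's English description precedes it below -/
import Mathlib

section
/- Let v, w ∈ ℂⁿ be unit vectors and let (x₁,x₂), (t₁,t₂) ∈ ℝ × (0,∞). If √x₂ · |⟨H(2√x₂·r + x₁), v⟩|² = √t₂ · |⟨H(2√t₂·r + t₁), w⟩|² for every r ∈ ℝ, then x₁ = t₁ and x₂ = t₂. -/
open MeasureTheory Filter Topology

noncomputable section

/-- The physicists' Hermite polynomial `H_m(y) = (−1)^m e^{y²} (d/dy)^m e^{−y²}`. -/
def hermiteH (m : ℕ) (y : ℝ) : ℝ :=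
  (-1 : ℝ) ^ m * Real.exp (y ^ 2) * iteratedDeriv m (fun x => Real.exp (-x ^ 2)) y

/-- The Hermite function `h_m(y) = (2^m m! √π)^{−1/2} H_m(y) e^{−y²/2}`. -/
def hermiteFun (m : ℕ) (y : ℝ) : ℝ :=
  (Real.sqrt (2 ^ m * m.factorial * Real.sqrt Real.pi))⁻¹ * hermiteH m y *
    Real.exp (-y ^ 2 / 2)


/-- `H(y) = (h_0(y), …, h_{n−1}(y))ᵀ`, viewed in `ℂⁿ`. -/
def HvecC (n : ℕ) (y : ℝ) : Fin n → ℂ := fun j => (hermiteFun j y : ℂ)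

namespace SepAux

open Polynomial

def physHermite : ℕ → Polynomial ℝ
  | 0 => 1
  | m + 1 => Polynomial.C 2 * Polynomial.X * physHermite m - Polynomial.derivative (physHermite m)

lemma physHermite_natDegree_le (m : ℕ) : (physHermite m).natDegree ≤ m := by
  induction m with
  | zero => simp [physHermite]
  | succ m ih =>
    rw [physHermite]
    refine (natDegree_sub_le _ _).trans (max_le ?_ ?_)
    · refine (natDegree_mul_le).trans ?_
      have : (Polynomial.C (2:ℝ) * Polynomial.X).natDegree ≤ 1 := by
        refine (natDegree_mul_le).trans (by simp)
      omega
    · exact (natDegree_derivative_le _).trans (by omega)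

lemma physHermite_coeff (m : ℕ) : (physHermite m).coeff m = 2 ^ m := by
  induction m with
  | zero => simp [physHermite]
  | succ m ih =>
    rw [physHermite]
    have h1 : (Polynomial.derivative (physHermite m)).coeff (m + 1) = 0 := by
      apply coeff_eq_zero_of_natDegree_lt
      exact lt_of_le_of_lt (natDegree_derivative_le _)
        (by have := physHermite_natDegree_le m; omega)
    have h2 : (Polynomial.C (2:ℝ) * Polynomial.X * physHermite m).coeff (m + 1)
        = 2 * (physHermite m).coeff m := by
      rw [mul_assoc, coeff_C_mul, coeff_X_mul]
    simp [h1, h2, ih, pow_succ]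
    ring

lemma hasDerivAt_poly_gauss (p : Polynomial ℝ) (c : ℝ) (y : ℝ) :
    HasDerivAt (fun x => c * p.eval x * Real.exp (-x ^ 2))
      (c * ((Polynomial.derivative p).eval y - 2 * y * p.eval y) * Real.exp (-y ^ 2)) y := by
  have h1 : HasDerivAt (fun x : ℝ => c * p.eval x) (c * (Polynomial.derivative p).eval y) y :=
    (p.hasDerivAt y).const_mul c
  have h2 : HasDerivAt (fun x : ℝ => -x ^ 2) (-(2 * y)) y := by
    exact ((hasDerivAt_pow 2 y).neg).congr_deriv (by norm_num)
  have h3 : HasDerivAt (fun x : ℝ => Real.exp (-x ^ 2)) (Real.exp (-y ^ 2) * (-(2 * y))) y :=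
    h2.exp
  have : HasDerivAt (fun x => c * p.eval x * Real.exp (-x ^ 2)) _ y := h1.mul h3
  convert this using 1
  ring

lemma iteratedDeriv_gauss (m : ℕ) (y : ℝ) :
    iteratedDeriv m (fun x => Real.exp (-x ^ 2)) y
      = (-1) ^ m * (physHermite m).eval y * Real.exp (-y ^ 2) := by
  induction m generalizing y with
  | zero => simp [physHermite]
  | succ m ih =>
    rw [iteratedDeriv_succ]
    have hfun : iteratedDeriv m (fun x => Real.exp (-x ^ 2))
        = fun y => (-1) ^ m * (physHermite m).eval y * Real.exp (-y ^ 2) := funext ih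
    rw [hfun]
    have := (hasDerivAt_poly_gauss (physHermite m) ((-1) ^ m) y).deriv
    rw [this, show physHermite (m+1) =
      Polynomial.C 2 * Polynomial.X * physHermite m
        - Polynomial.derivative (physHermite m) from rfl]
    simp [Polynomial.eval_mul, Polynomial.eval_sub]
    ring

lemma sum_smul_physHermite_eq_zero (n : ℕ) (a : ℕ → ℝ)
    (h : (∑ j ∈ Finset.range n, Polynomial.C (a j) * physHermite j) = 0) :
    ∀ j < n, a j = 0 := by
  induction n with
  | zero => omega
  | succ n ih =>
    have hcoeff := congrArg (fun p => Polynomial.coeff p n) h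
    simp only [Polynomial.finset_sum_coeff, Polynomial.coeff_C_mul, Polynomial.coeff_zero] at hcoeff
    rw [Finset.sum_range_succ] at hcoeff
    have hz : ∀ j ∈ Finset.range n, a j * (physHermite j).coeff n = 0 := by
      intro j hj
      rw [Polynomial.coeff_eq_zero_of_natDegree_lt
        (lt_of_le_of_lt (physHermite_natDegree_le j) (Finset.mem_range.mp hj)), mul_zero]
    rw [Finset.sum_eq_zero hz, zero_add, physHermite_coeff] at hcoeff
    have han : a n = 0 := by
      have : (2:ℝ) ^ n ≠ 0 := by positivity
      exact (mul_eq_zero.mp hcoeff).resolve_right this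
    have hrest : (∑ j ∈ Finset.range n, Polynomial.C (a j) * physHermite j) = 0 := by
      rw [Finset.sum_range_succ, han] at h
      simpa using h
    intro j hj
    rcases Nat.lt_succ_iff_lt_or_eq.mp hj with hj' | rfl
    · exact ih hrest j hj'
    · exact han

lemma poly_not_tendsto_zero {p : Polynomial ℝ} (hp : p ≠ 0) :
    ¬ Tendsto (fun r => p.eval r) atTop (𝓝 0) := by
  intro h
  have := ((Polynomial.tendsto_nhds_iff p).mp h).1
  exact hp (Polynomial.leadingCoeff_eq_zero.mp this)

lemma poly_mul_exp_tendsto_zero (p : Polynomial ℝ) {δ : ℝ} (hδ : 0 < δ) :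
    Tendsto (fun r => p.eval r * Real.exp (-(δ * r))) atTop (𝓝 0) := by
  have h1 : Tendsto (fun u : ℝ => (p.comp (Polynomial.C δ⁻¹ * Polynomial.X)).eval u / Real.exp u)
      atTop (𝓝 0) := Polynomial.tendsto_div_exp_atTop _
  have h2 : Tendsto (fun r : ℝ => δ * r) atTop atTop :=
    Tendsto.const_mul_atTop hδ tendsto_id
  have := h1.comp h2
  convert this using 2 with r
  simp only [Function.comp, Polynomial.eval_comp, Polynomial.eval_mul, Polynomial.eval_C,
    Polynomial.eval_X]
  rw [inv_mul_cancel_left₀ (ne_of_gt hδ)]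
  rw [Real.exp_neg]
  rw [div_eq_mul_inv]

lemma quadratic_tendsto_atTop {α : ℝ} (hα : 0 < α) (β γ : ℝ) :
    Tendsto (fun r : ℝ => α * r ^ 2 + β * r + γ) atTop atTop := by
  have h1 : Tendsto (fun r : ℝ => α * r + β) atTop atTop :=
    tendsto_atTop_add_const_right _ β (Tendsto.const_mul_atTop hα tendsto_id)
  have h2 : Tendsto (fun r : ℝ => r * (α * r + β)) atTop atTop :=
    Tendsto.atTop_mul_atTop₀ tendsto_id h1
  have h3 := tendsto_atTop_add_const_right _ γ h2
  convert h3 using 2 with r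
  ring

lemma key_contradiction {S₁ S₂ : Polynomial ℝ} (hS₂ : S₂ ≠ 0) {α β γ : ℝ}
    (hid : ∀ r : ℝ, S₂.eval r = S₁.eval r * Real.exp (-(α * r ^ 2 + β * r + γ)))
    (hcase : 0 < α ∨ (α = 0 ∧ 0 < β)) : False := by
  obtain ⟨δ, hδ, hev⟩ : ∃ δ : ℝ, 0 < δ ∧ ∀ᶠ r in atTop, δ * r ≤ α * r ^ 2 + β * r + γ := by
    rcases hcase with hα | ⟨hα, hβ⟩
    · refine ⟨1, one_pos, ?_⟩
      have := (quadratic_tendsto_atTop hα (β - 1) γ).eventually_ge_atTop 0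
      filter_upwards [this] with r hr
      nlinarith
    · refine ⟨β / 2, by positivity, ?_⟩
      have : Tendsto (fun r : ℝ => β / 2 * r + γ) atTop atTop :=
        tendsto_atTop_add_const_right _ γ (Tendsto.const_mul_atTop (by positivity) tendsto_id)
      filter_upwards [this.eventually_ge_atTop 0] with r hr
      rw [hα]; nlinarith
  have hbound : ∀ᶠ r in atTop, ‖S₂.eval r‖ ≤ ‖S₁.eval r * Real.exp (-(δ * r))‖ := by
    filter_upwards [hev] with r hr
    rw [hid r]
    have hexp : Real.exp (-(α * r ^ 2 + β * r + γ)) ≤ Real.exp (-(δ * r)) :=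
      Real.exp_le_exp.mpr (by linarith)
    rw [Real.norm_eq_abs, Real.norm_eq_abs, abs_mul, abs_mul,
      abs_of_pos (Real.exp_pos _), abs_of_pos (Real.exp_pos _)]
    exact mul_le_mul_of_nonneg_left hexp (abs_nonneg _)
  have hzero : Tendsto (fun r => S₂.eval r) atTop (𝓝 0) :=
    squeeze_zero_norm' hbound (by simpa using (poly_mul_exp_tendsto_zero S₁ hδ).norm)
  exact poly_not_tendsto_zero hS₂ hzero

def hermCoef (m : ℕ) : ℝ := (Real.sqrt (2 ^ m * m.factorial * Real.sqrt Real.pi))⁻¹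

lemma hermCoef_pos (m : ℕ) : 0 < hermCoef m := by
  have h1 : (0:ℝ) < 2 ^ m * m.factorial * Real.sqrt Real.pi := by
    have := Real.sqrt_pos.mpr Real.pi_pos
    have h2 : (0:ℝ) < (m.factorial : ℝ) := by exact_mod_cast m.factorial_pos
    positivity
  exact inv_pos.mpr (Real.sqrt_pos.mpr h1)

lemma hermiteH_eq (m : ℕ) (y : ℝ) : hermiteH m y = (physHermite m).eval y := by
  rw [hermiteH, iteratedDeriv_gauss]
  rw [show ((-1:ℝ)^m * Real.exp (y^2) * ((-1)^m * (physHermite m).eval y * Real.exp (-y^2)))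
    = ((-1:ℝ)^m)^2 * (Real.exp (y^2) * Real.exp (-y^2)) * (physHermite m).eval y by ring]
  rw [← Real.exp_add]
  simp [← pow_mul, pow_mul']

lemma hermiteFun_eq (m : ℕ) (y : ℝ) :
    hermiteFun m y = hermCoef m * (physHermite m).eval y * Real.exp (-y ^ 2 / 2) := by
  rw [hermiteFun, hermiteH_eq, hermCoef]

def coefR {n : ℕ} (v : Fin n → ℂ) (j : ℕ) : ℝ :=
  if h : j < n then (v ⟨j, h⟩).re * hermCoef j else 0

def coefI {n : ℕ} (v : Fin n → ℂ) (j : ℕ) : ℝ :=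
  if h : j < n then (v ⟨j, h⟩).im * hermCoef j else 0

def Apoly {n : ℕ} (v : Fin n → ℂ) : Polynomial ℝ :=
  ∑ j ∈ Finset.range n, Polynomial.C (coefR v j) * physHermite j

def Bpoly {n : ℕ} (v : Fin n → ℂ) : Polynomial ℝ :=
  ∑ j ∈ Finset.range n, Polynomial.C (coefI v j) * physHermite j

def Qpoly {n : ℕ} (v : Fin n → ℂ) : Polynomial ℝ := (Apoly v) ^ 2 + (Bpoly v) ^ 2

lemma star_mul_ofReal_re (z : ℂ) (r : ℝ) : (star z * (r : ℂ)).re = z.re * r := by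
  simp [Complex.mul_re]

lemma star_mul_ofReal_im (z : ℂ) (r : ℝ) : (star z * (r : ℂ)).im = -(z.im * r) := by
  simp [Complex.mul_im]

lemma dot_re {n : ℕ} (v : Fin n → ℂ) (y : ℝ) :
    (dotProduct (star v) (HvecC n y)).re
      = Real.exp (-y ^ 2 / 2) * (Apoly v).eval y := by
  rw [dotProduct, Apoly]
  simp only [Complex.re_sum, eval_finset_sum, eval_mul, eval_C, Finset.mul_sum]
  rw [← Fin.sum_univ_eq_sum_range
    (fun j => Real.exp (-y^2/2) * (coefR v j * (physHermite j).eval y))]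
  congr 1
  funext j
  simp only [Pi.star_apply, HvecC, coefR, j.isLt, dif_pos, Fin.eta]
  rw [hermiteFun_eq, star_mul_ofReal_re]
  ring

lemma dot_im {n : ℕ} (v : Fin n → ℂ) (y : ℝ) :
    (dotProduct (star v) (HvecC n y)).im
      = -(Real.exp (-y ^ 2 / 2) * (Bpoly v).eval y) := by
  rw [dotProduct, Bpoly]
  simp only [Complex.im_sum, eval_finset_sum, eval_mul, eval_C, Finset.mul_sum]
  rw [← Fin.sum_univ_eq_sum_range
    (fun j => Real.exp (-y^2/2) * (coefI v j * (physHermite j).eval y)), ← Finset.sum_neg_distrib]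
  congr 1
  funext j
  simp only [Pi.star_apply, HvecC, coefI, j.isLt, dif_pos, Fin.eta]
  rw [hermiteFun_eq, star_mul_ofReal_im]
  ring

lemma norm_dot_sq {n : ℕ} (v : Fin n → ℂ) (y : ℝ) :
    ‖dotProduct (star v) (HvecC n y)‖ ^ 2
      = Real.exp (-y ^ 2) * (Qpoly v).eval y := by
  rw [Complex.sq_norm, Complex.normSq_apply, dot_re, dot_im, Qpoly]
  simp only [eval_add, eval_pow]
  have : Real.exp (-y^2/2) * Real.exp (-y^2/2) = Real.exp (-y^2) := by
    rw [← Real.exp_add]; ring_nf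
  nlinarith [this]

lemma Qpoly_ne_zero {n : ℕ} {v : Fin n → ℂ}
    (hv : dotProduct (star v) v = 1) : Qpoly v ≠ 0 := by
  intro h0
  have heval : ∀ y : ℝ, (Apoly v).eval y = 0 ∧ (Bpoly v).eval y = 0 := by
    intro y
    have := congrArg (fun p => Polynomial.eval y p) h0
    simp only [Qpoly, eval_add, eval_pow, Polynomial.eval_zero] at this
    constructor <;> nlinarith [this]
  have hA : Apoly v = 0 := Polynomial.funext fun y => by simpa using (heval y).1
  have hB : Bpoly v = 0 := Polynomial.funext fun y => by simpa using (heval y).2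
  have hRA := sum_smul_physHermite_eq_zero n (coefR v) hA
  have hRB := sum_smul_physHermite_eq_zero n (coefI v) hB
  have hv0 : v = 0 := by
    funext j
    have h1 := hRA j j.isLt
    have h2 := hRB j j.isLt
    simp only [coefR, coefI, j.isLt, dif_pos, Fin.eta] at h1 h2
    have hc := (hermCoef_pos j).ne'
    apply Complex.ext
    · simpa [hc] using mul_eq_zero.mp h1
    · simpa [hc] using mul_eq_zero.mp h2
  rw [hv0] at hv
  simp [dotProduct] at hv

end SepAux

open SepAux Polynomial in
/-- If `v, w` are unit vectors in `ℂⁿ` and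
`√x₂ |⟨H(2√x₂ r + x₁), v⟩|² = √t₂ |⟨H(2√t₂ r + t₁), w⟩|²` for all `r ∈ ℝ`, then
`(x₁,x₂) = (t₁,t₂)`. -/
theorem separation_of_interior_points (n : ℕ) (hn : 1 ≤ n)
    (v w : Fin n → ℂ)
    (hv : dotProduct (star v) v = 1) (hw : dotProduct (star w) w = 1)
    (x₁ x₂ t₁ t₂ : ℝ) (hx₂ : 0 < x₂) (ht₂ : 0 < t₂)
    (h : ∀ r : ℝ,
      Real.sqrt x₂ * ‖dotProduct (star v) (HvecC n (2 * Real.sqrt x₂ * r + x₁))‖ ^ 2 =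
      Real.sqrt t₂ * ‖dotProduct (star w) (HvecC n (2 * Real.sqrt t₂ * r + t₁))‖ ^ 2) :
    x₁ = t₁ ∧ x₂ = t₂ := by
  have hsx : 0 < Real.sqrt x₂ := Real.sqrt_pos.mpr hx₂
  have hst : 0 < Real.sqrt t₂ := Real.sqrt_pos.mpr ht₂
  set a := 2 * Real.sqrt x₂ with ha_def
  set b := 2 * Real.sqrt t₂ with hb_def
  have ha : 0 < a := by positivity
  have hb : 0 < b := by positivity
  have hQx := Qpoly_ne_zero hv
  have hQt := Qpoly_ne_zero hw
  set S₁ : Polynomial ℝ := Polynomial.C (Real.sqrt x₂) *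
    ((Qpoly v).comp (Polynomial.C a * Polynomial.X + Polynomial.C x₁)) with hS₁def
  set S₂ : Polynomial ℝ := Polynomial.C (Real.sqrt t₂) *
    ((Qpoly w).comp (Polynomial.C b * Polynomial.X + Polynomial.C t₁)) with hS₂def
  have hS₁eval : ∀ r : ℝ, S₁.eval r = Real.sqrt x₂ * (Qpoly v).eval (a * r + x₁) := by
    intro r; simp [hS₁def, Polynomial.eval_comp]
  have hS₂eval : ∀ r : ℝ, S₂.eval r = Real.sqrt t₂ * (Qpoly w).eval (b * r + t₁) := by
    intro r; simp [hS₂def, Polynomial.eval_comp]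
  have hS₁ : S₁ ≠ 0 := by
    intro h0
    apply hQx
    apply Polynomial.funext
    intro y
    have he := congrArg (Polynomial.eval ((y - x₁) / a)) h0
    rw [hS₁eval] at he
    have hy : a * ((y - x₁) / a) + x₁ = y := by field_simp; ring
    rw [hy, Polynomial.eval_zero] at he
    simpa [hsx.ne'] using mul_eq_zero.mp he
  have hS₂ : S₂ ≠ 0 := by
    intro h0
    apply hQt
    apply Polynomial.funext
    intro y
    have he := congrArg (Polynomial.eval ((y - t₁) / b)) h0
    rw [hS₂eval] at he
    have hy : b * ((y - t₁) / b) + t₁ = y := by field_simp; ring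
    rw [hy, Polynomial.eval_zero] at he
    simpa [hst.ne'] using mul_eq_zero.mp he
  have hkey : ∀ r : ℝ,
      Real.exp (-(a * r + x₁) ^ 2) * S₁.eval r = Real.exp (-(b * r + t₁) ^ 2) * S₂.eval r := by
    intro r
    have h0 := h r
    rw [norm_dot_sq, norm_dot_sq] at h0
    rw [hS₁eval, hS₂eval]
    linear_combination h0
  have hid : ∀ r : ℝ, S₂.eval r = S₁.eval r *
      Real.exp (-((a^2 - b^2) * r ^ 2 + (2*(a*x₁ - b*t₁)) * r + (x₁^2 - t₁^2))) := by
    intro r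
    have hk := hkey r
    have hexp2 : Real.exp (-(a * r + x₁) ^ 2) = Real.exp (-(b * r + t₁) ^ 2) *
        Real.exp (-((a^2 - b^2) * r ^ 2 + (2*(a*x₁ - b*t₁)) * r + (x₁^2 - t₁^2))) := by
      rw [← Real.exp_add]; congr 1; ring
    rw [hexp2] at hk
    exact mul_left_cancel₀ (Real.exp_ne_zero (-(b * r + t₁) ^ 2)) (by linear_combination -hk)
  have hid' : ∀ r : ℝ, S₁.eval r = S₂.eval r *
      Real.exp (-((b^2 - a^2) * r ^ 2 + (2*(b*t₁ - a*x₁)) * r + (t₁^2 - x₁^2))) := by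
    intro r
    have hk := hkey r
    have hexp2 : Real.exp (-(b * r + t₁) ^ 2) = Real.exp (-(a * r + x₁) ^ 2) *
        Real.exp (-((b^2 - a^2) * r ^ 2 + (2*(b*t₁ - a*x₁)) * r + (t₁^2 - x₁^2))) := by
      rw [← Real.exp_add]; congr 1; ring
    rw [hexp2] at hk
    exact mul_left_cancel₀ (Real.exp_ne_zero (-(a * r + x₁) ^ 2)) (by linear_combination hk)
  have ha2 : a ^ 2 = 4 * x₂ := by
    rw [ha_def, mul_pow, Real.sq_sqrt hx₂.le]; ring
  have hb2 : b ^ 2 = 4 * t₂ := by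
    rw [hb_def, mul_pow, Real.sq_sqrt ht₂.le]; ring
  rcases lt_trichotomy (a ^ 2) (b ^ 2) with hab | hab | hab
  · exact absurd (key_contradiction hS₁ hid' (Or.inl (by linarith))) (by simp)
  · have hx2t2 : x₂ = t₂ := by linarith
    have hab' : a = b := by rw [ha_def, hb_def, hx2t2]
    rcases lt_trichotomy x₁ t₁ with hx | hx | hx
    · exact absurd (key_contradiction hS₁ hid'
        (Or.inr ⟨by linarith, by rw [← hab']; nlinarith⟩)) (by simp)
    · exact ⟨hx, hx2t2⟩
    · exact absurd (key_contradiction hS₂ hid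
        (Or.inr ⟨by linarith, by rw [← hab']; nlinarith⟩)) (by simp)
  · exact absurd (key_contradiction hS₂ hid (Or.inl (by linarith))) (by simp)

end
end

section
/- Let v, w ∈ ℂⁿ be unit vectors. If for all r₁, r₂ ∈ ℝ one has conj(⟨w, H(r₁)⟩)·⟨w, H(r₂)⟩ = conj(⟨v, H(r₁)⟩)·⟨v, H(r₂)⟩, then there exists λ ∈ ℂ with |λ| = 1 such that w = λ·v. -/
open MeasureTheory Filter Topology

noncomputable section

open Polynomial in
lemma hermiteH_eq_aeval (m : ℕ) (y : ℝ) :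
    hermiteH m y = Real.sqrt 2 ^ m * aeval (Real.sqrt 2 * y) (hermite m) := by
  have h2 : (Real.sqrt 2) ^ 2 = 2 := Real.sq_sqrt (by norm_num)
  have hg : ContDiff ℝ m (fun t : ℝ => Real.exp (-(t ^ 2 / 2))) :=
    (((contDiff_id.pow 2).div_const 2).neg).exp
  have hfun : (fun x : ℝ => Real.exp (-x ^ 2)) =
      fun x : ℝ => (fun t : ℝ => Real.exp (-(t ^ 2 / 2))) (Real.sqrt 2 * x) := by
    funext x
    simp only [mul_pow, h2]
    ring_nf
  have hiter : iteratedDeriv m (fun x : ℝ => Real.exp (-x ^ 2)) y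
      = Real.sqrt 2 ^ m *
        iteratedDeriv m (fun t : ℝ => Real.exp (-(t ^ 2 / 2))) (Real.sqrt 2 * y) := by
    rw [hfun]
    exact congrFun (iteratedDeriv_comp_const_mul hg _) y
  have hd : iteratedDeriv m (fun t : ℝ => Real.exp (-(t ^ 2 / 2))) (Real.sqrt 2 * y)
      = (-1 : ℝ) ^ m * aeval (Real.sqrt 2 * y) (hermite m) * Real.exp (-y ^ 2) := by
    rw [iteratedDeriv_eq_iterate, deriv_gaussian_eq_hermite_mul_gaussian]
    congr 2
    rw [mul_pow, h2]; ring
  rw [hermiteH, hiter, hd]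
  have hm1 : (-1 : ℝ) ^ m * (-1 : ℝ) ^ m = 1 := by
    rw [← mul_pow]; norm_num
  have hee : Real.exp (y ^ 2) * Real.exp (-y ^ 2) = 1 := by
    rw [← Real.exp_add]; simp
  set A := aeval (Real.sqrt 2 * y) (hermite m)
  calc (-1 : ℝ) ^ m * Real.exp (y ^ 2) *
        (Real.sqrt 2 ^ m * ((-1 : ℝ) ^ m * A * Real.exp (-y ^ 2)))
      = ((-1 : ℝ) ^ m * (-1 : ℝ) ^ m) * (Real.exp (y ^ 2) * Real.exp (-y ^ 2)) *
          (Real.sqrt 2 ^ m * A) := by ring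
    _ = Real.sqrt 2 ^ m * A := by rw [hm1, hee]; ring

lemma cast_aeval (p : Polynomial ℤ) (x : ℝ) :
    ((Polynomial.aeval x p : ℝ) : ℂ) = (p.map (Int.castRingHom ℂ)).eval (x : ℂ) := by
  rw [Polynomial.eval_map, Polynomial.aeval_def]
  rw [show (Int.castRingHom ℂ) = Complex.ofRealHom.comp (Int.castRingHom ℝ) from
    Subsingleton.elim _ _]
  exact Polynomial.hom_eval₂ p (Int.castRingHom ℝ) Complex.ofRealHom x

lemma poly_tri (n : ℕ) (e : Fin n → ℂ)
    (hP : ∑ j : Fin n,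
      Polynomial.C (e j) * (Polynomial.hermite (j : ℕ)).map (Int.castRingHom ℂ) = 0) :
    ∀ j, e j = 0 := by
  induction n with
  | zero => exact fun j => j.elim0
  | succ n ih =>
    rw [Fin.sum_univ_castSucc] at hP
    simp only [Fin.coe_castSucc] at hP
    have hlast : e (Fin.last n) = 0 := by
      have h := congrArg (fun q => Polynomial.coeff q n) hP
      simp only [Polynomial.finset_sum_coeff, Polynomial.coeff_add, Polynomial.coeff_C_mul,
        Polynomial.coeff_map, Polynomial.coeff_zero, Fin.val_last] at h
      rw [Finset.sum_eq_zero (fun i _ => by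
        rw [Polynomial.coeff_hermite_of_lt i.isLt]; simp), zero_add,
        Polynomial.coeff_hermite_self] at h
      simpa using h
    have hstep : ∑ i : Fin n,
        Polynomial.C ((fun i => e i.castSucc) i) *
          (Polynomial.hermite (i : ℕ)).map (Int.castRingHom ℂ) = 0 := by
      rw [hlast] at hP
      simpa using hP
    intro j
    refine Fin.lastCases hlast (fun i => ?_) j
    exact ih (fun i => e i.castSucc) hstep i

open Polynomial in
lemma sum_hermite_eq_zero {n : ℕ} (c : Fin n → ℂ)
    (hc : ∀ r : ℝ, ∑ j : Fin n, c j * (hermiteFun (j : ℕ) r : ℂ) = 0) : c = 0 := by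
  have h2 : Real.sqrt 2 ≠ 0 := by positivity
  set d : Fin n → ℝ := fun j =>
    (Real.sqrt (2 ^ (j : ℕ) * (j : ℕ).factorial * Real.sqrt Real.pi))⁻¹ with hd
  have hdne : ∀ j, d j ≠ 0 := by
    intro j
    have hpos : 0 < Real.sqrt (2 ^ (j : ℕ) * (j : ℕ).factorial * Real.sqrt Real.pi) := by
      apply Real.sqrt_pos.mpr
      have h1 := Real.sqrt_pos.mpr Real.pi_pos
      have h2 : (0:ℝ) < (j:ℕ).factorial := by exact_mod_cast (j:ℕ).factorial_pos
      positivity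
    exact inv_ne_zero hpos.ne'
  have key : ∀ x : ℝ, ∑ j : Fin n,
      (c j * (d j : ℂ) * (Real.sqrt 2 : ℂ) ^ (j : ℕ)) *
        ((aeval x (hermite (j : ℕ)) : ℝ) : ℂ) = 0 := by
    intro x
    have hx : Real.sqrt 2 * (x / Real.sqrt 2) = x := by field_simp
    have h0 := hc (x / Real.sqrt 2)
    set r := x / Real.sqrt 2 with hr
    have hterm : ∀ j : Fin n, c j * (hermiteFun (j : ℕ) r : ℂ)
        = ((c j * (d j : ℂ) * (Real.sqrt 2 : ℂ) ^ (j : ℕ)) *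
            ((aeval x (hermite (j : ℕ)) : ℝ) : ℂ)) * ((Real.exp (-r ^ 2 / 2) : ℝ) : ℂ) := by
      intro j
      rw [hermiteFun, hermiteH_eq_aeval, hx, hd]
      push_cast
      ring
    rw [Finset.sum_congr rfl (fun j _ => hterm j), ← Finset.sum_mul] at h0
    have hE : ((Real.exp (-r ^ 2 / 2) : ℝ) : ℂ) ≠ 0 := by
      exact_mod_cast Real.exp_ne_zero _
    exact (mul_eq_zero.mp h0).resolve_right hE
  set P : Polynomial ℂ := ∑ j : Fin n,
    Polynomial.C (c j * (d j : ℂ) * (Real.sqrt 2 : ℂ) ^ (j : ℕ)) *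
      (hermite (j : ℕ)).map (Int.castRingHom ℂ) with hPdef
  have hProot : ∀ x : ℝ, P.eval (x : ℂ) = 0 := by
    intro x
    rw [hPdef, Polynomial.eval_finset_sum]
    rw [← key x]
    refine Finset.sum_congr rfl fun j _ => ?_
    rw [Polynomial.eval_mul, Polynomial.eval_C, cast_aeval]
  have hP0 : P = 0 := by
    apply Polynomial.eq_zero_of_infinite_isRoot
    have hinf : (Set.range (fun x : ℝ => (x : ℂ))).Infinite :=
      Set.infinite_range_of_injective Complex.ofReal_injective
    exact hinf.mono (by rintro z ⟨x, rfl⟩; exact hProot x)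
  have he0 := poly_tri n _ (hPdef ▸ hP0)
  funext j
  have := he0 j
  have hs2 : ((Real.sqrt 2 : ℂ)) ^ (j : ℕ) ≠ 0 := by
    apply pow_ne_zero
    exact_mod_cast h2
  have hdc : ((d j : ℝ) : ℂ) ≠ 0 := by exact_mod_cast hdne j
  have := mul_eq_zero.mp this
  rcases this with h' | h'
  · rcases mul_eq_zero.mp h' with h'' | h''
    · exact h''
    · exact absurd h'' hdc
  · exact absurd h' hs2

/-- If `v, w` are unit vectors in `ℂⁿ` such that
`conj(⟨w, H(r₁)⟩)·⟨w, H(r₂)⟩ = conj(⟨v, H(r₁)⟩)·⟨v, H(r₂)⟩` for all `r₁, r₂ ∈ ℝ`,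
then `w = λ·v` for some unimodular `λ ∈ ℂ`. -/

theorem separation_same_fiber (n : ℕ) (hn : 1 ≤ n) (v w : Fin n → ℂ)
    (hv : dotProduct (star v) v = 1) (hw : dotProduct (star w) w = 1)
    (h : ∀ r₁ r₂ : ℝ,
      (starRingEnd ℂ) (dotProduct (star w) (HvecC n r₁)) *
          dotProduct (star w) (HvecC n r₂) =
        (starRingEnd ℂ) (dotProduct (star v) (HvecC n r₁)) *
          dotProduct (star v) (HvecC n r₂)) :
    ∃ lam : ℂ, ‖lam‖ = 1 ∧ w = lam • v := by
  set f : ℝ → ℂ := fun r => dotProduct (star w) (HvecC n r) with hf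
  set g : ℝ → ℂ := fun r => dotProduct (star v) (HvecC n r) with hg
  have hfsum : ∀ r : ℝ, f r = ∑ j : Fin n, (starRingEnd ℂ) (w j) * (hermiteFun (j : ℕ) r : ℂ) := by
    intro r
    simp [hf, dotProduct, HvecC, Pi.star_apply, RCLike.star_def]
  have hgsum : ∀ r : ℝ, g r = ∑ j : Fin n, (starRingEnd ℂ) (v j) * (hermiteFun (j : ℕ) r : ℂ) := by
    intro r
    simp [hg, dotProduct, HvecC, Pi.star_apply, RCLike.star_def]
  -- f is not identically zero
  have hwne : ∃ r₀ : ℝ, f r₀ ≠ 0 := by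
    by_contra hcon
    push_neg at hcon
    have : (fun j : Fin n => (starRingEnd ℂ) (w j)) = 0 := by
      apply sum_hermite_eq_zero
      intro r
      rw [← hfsum r]
      exact hcon r
    have hw0 : w = 0 := by
      funext j
      have := congrFun this j
      simpa using this
    rw [hw0] at hw
    simp [dotProduct] at hw
  obtain ⟨r₀, hf0⟩ := hwne
  have hconjf0 : (starRingEnd ℂ) (f r₀) ≠ 0 := by
    simpa using hf0
  have hg0 : g r₀ ≠ 0 := by
    intro hgz
    have this2 : (starRingEnd ℂ) (f r₀) * f r₀ = (starRingEnd ℂ) (g r₀) * g r₀ := h r₀ r₀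
    rw [hgz, mul_zero] at this2
    have this := this2
    rcases mul_eq_zero.mp this with h' | h'
    · exact hconjf0 h'
    · exact hf0 h'
  set μ : ℂ := (starRingEnd ℂ) (g r₀) / (starRingEnd ℂ) (f r₀) with hμ
  have hmult : ∀ r : ℝ, f r = μ * g r := by
    intro r
    have this : (starRingEnd ℂ) (f r₀) * f r = (starRingEnd ℂ) (g r₀) * g r := h r₀ r
    rw [hμ, div_mul_eq_mul_div, eq_div_iff hconjf0]
    linear_combination this
  have hnormfg : ‖f r₀‖ = ‖g r₀‖ := by
    have this : (starRingEnd ℂ) (f r₀) * f r₀ = (starRingEnd ℂ) (g r₀) * g r₀ := h r₀ r₀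
    have hnn := congrArg norm this
    simp only [norm_mul, RCLike.norm_conj] at hnn
    have h1 : ‖f r₀‖ * ‖f r₀‖ = ‖g r₀‖ * ‖g r₀‖ := hnn
    nlinarith [norm_nonneg (f r₀), norm_nonneg (g r₀)]
  have hnormμ : ‖μ‖ = 1 := by
    rw [hμ, norm_div, RCLike.norm_conj, RCLike.norm_conj, ← hnormfg,
      div_self (norm_ne_zero_iff.mpr hf0)]
  -- conj(w j) = μ conj(v j)
  have hcoef : (fun j : Fin n => (starRingEnd ℂ) (w j) - μ * (starRingEnd ℂ) (v j)) = 0 := by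
    apply sum_hermite_eq_zero
    intro r
    have : ∑ j : Fin n, ((starRingEnd ℂ) (w j) - μ * (starRingEnd ℂ) (v j)) *
        (hermiteFun (j : ℕ) r : ℂ) = f r - μ * g r := by
      rw [hfsum r, hgsum r, Finset.mul_sum, ← Finset.sum_sub_distrib]
      refine Finset.sum_congr rfl fun j _ => ?_
      ring
    rw [this, hmult r]
    ring
  refine ⟨(starRingEnd ℂ) μ, ?_, ?_⟩
  · rw [RCLike.norm_conj]; exact hnormμ
  · funext j
    have := congrFun hcoef j
    simp only [Pi.zero_apply, sub_eq_zero] at this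
    have := congrArg (starRingEnd ℂ) this
    simpa [Pi.smul_apply, smul_eq_mul, mul_comm] using this
end
end
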